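/- The function (ξ,w) ↦ G(ξ,w) is holomorphic on ℂ × (ℂ∖{0}): the map p ↦ exp(p.1²/(4π) + p.1/(1−i)) · ∏_{ν=0}^∞ (1 − p.2·exp(−i·p.1 − 2πν)) · ∏_{μ=1}^∞ (1 − p.2⁻¹·exp(i·p.1 − 2πμ)) is complex-differentiable on the open set {p ∈ ℂ × ℂ : p.2 ≠ 0}. -/

import Mathlib

/-- Stein's function `F⁺(z,w)` written in the variable `ξ = log z`. -/
noncomputable def steinG (ξ w : ℂ) : ℂ :=
  Complex.exp (ξ ^ 2 / (4 * Real.pi) + ξ / (1 - Complex.I)) *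
    (∏' ν : ℕ, (1 - w * Complex.exp (-Complex.I * ξ - 2 * Real.pi * ν))) *
    (∏' μ : ℕ, (1 - w⁻¹ * Complex.exp (Complex.I * ξ - 2 * Real.pi * (μ + 1))))

open Complex Filter Metric

set_option maxHeartbeats 1000000 in
/-- The auxiliary single-variable function `q ↦ ∏' ν, (1 + q * c ^ ν)` is entire
when `‖c‖ < 1`. -/
lemma steinAux_differentiable {c : ℂ} (hc : ‖c‖ < 1) :
    Differentiable ℂ (fun q : ℂ => ∏' ν : ℕ, (1 + q * c ^ ν)) := by
  intro q₀
  set R : ℝ := ‖q₀‖ + 1 with hRdef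
  -- choose N with R * ‖c‖ ^ N ≤ 1/2
  have h0 : Tendsto (fun n : ℕ => R * ‖c‖ ^ n) atTop (nhds 0) := by
    simpa using (tendsto_pow_atTop_nhds_zero_of_lt_one (norm_nonneg c) hc).const_mul R
  obtain ⟨N, hN⟩ : ∃ N : ℕ, R * ‖c‖ ^ N ≤ 1 / 2 := by
    have := (h0.eventually (eventually_le_nhds (by norm_num : (0:ℝ) < 1/2))).exists
    exact this
  set s : Set ℂ := ball q₀ 1 with hsdef
  have hqR : ∀ q ∈ s, ‖q‖ < R := by
    intro q hq
    have : dist q q₀ < 1 := mem_ball.mp hq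
    calc ‖q‖ ≤ ‖q₀‖ + dist q q₀ := by
            simpa [dist_eq_norm] using norm_le_insert' q q₀
      _ < R := by simp [hRdef]; linarith
  -- bound on the tail factors
  have hbound : ∀ (ν : ℕ), ∀ q ∈ s, ‖q * c ^ (ν + N)‖ ≤ 1 / 2 * ‖c‖ ^ ν := by
    intro ν q hq
    have h1 : ‖q * c ^ (ν + N)‖ = ‖q‖ * (‖c‖ ^ ν * ‖c‖ ^ N) := by
      rw [norm_mul, norm_pow, pow_add]
    rw [h1]
    have h2 : ‖q‖ * (‖c‖ ^ ν * ‖c‖ ^ N) ≤ R * ‖c‖ ^ N * ‖c‖ ^ ν := by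
      have := (hqR q hq).le
      have hnn : (0:ℝ) ≤ ‖c‖ ^ ν * ‖c‖ ^ N := by positivity
      nlinarith [pow_nonneg (norm_nonneg c) ν, pow_nonneg (norm_nonneg c) N]
    exact h2.trans (by nlinarith [pow_nonneg (norm_nonneg c) ν])
  have hhalf : ∀ (ν : ℕ), ∀ q ∈ s, ‖q * c ^ (ν + N)‖ ≤ 1 / 2 := by
    intro ν q hq
    refine (hbound ν q hq).trans ?_
    have : ‖c‖ ^ ν ≤ 1 := pow_le_one₀ (norm_nonneg c) hc.le
    linarith
  have hlt : ∀ (ν : ℕ), ∀ q ∈ s, ‖q * c ^ (ν + N)‖ < 1 := by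
    intro ν q hq; exact lt_of_le_of_lt (hhalf ν q hq) (by norm_num)
  -- nonvanishing of tail factors
  have hne : ∀ q ∈ s, ∀ ν : ℕ, (1 + q * c ^ (ν + N)) ≠ 0 := fun q hq ν =>
    slitPlane_ne_zero (mem_slitPlane_of_norm_lt_one (hlt ν q hq))
  -- the log series and its uniform bound
  set g : ℕ → ℂ → ℂ := fun ν q => Complex.log (1 + q * c ^ (ν + N)) with hgdef
  set u : ℕ → ℝ := fun ν => 3 / 2 * (1 / 2 * ‖c‖ ^ ν) with hudef
  have hu : Summable u := by
    have h : Summable (fun ν : ℕ => ‖c‖ ^ ν) := summable_geometric_of_lt_one (norm_nonneg c) hc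
    exact (h.mul_left _).mul_left _
  have hg_bound : ∀ (ν : ℕ), ∀ q ∈ s, ‖g ν q‖ ≤ u ν := by
    intro ν q hq
    have := Complex.norm_log_one_add_half_le_self (hhalf ν q hq)
    refine this.trans ?_
    have := hbound ν q hq
    simp only [hudef]
    nlinarith
  have hgdiff : ∀ ν : ℕ, DifferentiableOn ℂ (g ν) s := by
    intro ν q hq
    have hd : DifferentiableAt ℂ (fun q : ℂ => 1 + q * c ^ (ν + N)) q :=
      (differentiableAt_id.mul_const _).const_add 1
    exact (hd.clog (mem_slitPlane_of_norm_lt_one (hlt ν q hq))).differentiableWithinAt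
  -- the sum of the log series is differentiable on s
  have hT : TendstoUniformlyOn (fun t : Finset ℕ => fun q => ∑ ν ∈ t, g ν q)
      (fun q => ∑' ν, g ν q) atTop s :=
    tendstoUniformlyOn_tsum hu (fun ν q hq => hg_bound ν q hq)
  have hTdiff : DifferentiableOn ℂ (fun q => ∑' ν, g ν q) s := by
    refine hT.tendstoLocallyUniformlyOn.differentiableOn ?_ isOpen_ball
    exact Eventually.of_forall fun t =>
      DifferentiableOn.fun_sum fun ν _ => hgdiff ν
  -- summability of the log series, pointwise
  have hgsum : ∀ q ∈ s, Summable fun ν => g ν q := fun q hq =>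
    Summable.of_norm (Summable.of_nonneg_of_le (fun ν => norm_nonneg _)
      (fun ν => hg_bound ν q hq) hu)
  -- the tail product equals exp of the sum of logs
  have htail : ∀ q ∈ s, HasProd (fun ν : ℕ => 1 + q * c ^ (ν + N))
      (Complex.exp (∑' ν, g ν q)) := by
    intro q hq
    have h1 : HasProd (cexp ∘ fun ν => g ν q) (cexp (∑' ν, g ν q)) :=
      (hgsum q hq).hasSum.cexp
    have h2 : (cexp ∘ fun ν => g ν q) = fun ν : ℕ => 1 + q * c ^ (ν + N) := by
      funext ν
      exact Complex.exp_log (hne q hq ν)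
    rwa [h2] at h1
  -- the key local identity
  have hkey : ∀ q ∈ s, (∏' ν : ℕ, (1 + q * c ^ ν)) =
      (∏ ν ∈ Finset.range N, (1 + q * c ^ ν)) * Complex.exp (∑' ν, g ν q) := by
    intro q hq
    have hm : Multipliable fun ν : ℕ => 1 + q * c ^ (ν + N) := ⟨_, htail q hq⟩
    rw [← (htail q hq).tprod_eq]
    exact (Multipliable.prod_mul_tprod_nat_mul' (f := fun ν : ℕ => 1 + q * c ^ ν) hm).symm
  -- the right-hand side is differentiable on s
  have hFdiff : DifferentiableOn ℂ
      (fun q => (∏ ν ∈ Finset.range N, (1 + q * c ^ ν)) *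
        Complex.exp (∑' ν, g ν q)) s := by
    refine DifferentiableOn.mul ?_ hTdiff.cexp
    refine DifferentiableOn.fun_finsetProd fun ν _ => ?_
    intro q hq
    exact ((differentiableAt_id.mul_const _).const_add 1).differentiableWithinAt
  have : DifferentiableOn ℂ (fun q : ℂ => ∏' ν : ℕ, (1 + q * c ^ ν)) s :=
    hFdiff.congr hkey
  exact (this.differentiableAt (isOpen_ball.mem_nhds (mem_ball_self one_pos)))

/-- Stein's function `(ξ,w) ↦ G(ξ,w)` is holomorphic on `ℂ × (ℂ∖{0})`. -/
theorem steinG_differentiableOn :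
    DifferentiableOn ℂ (fun p : ℂ × ℂ => steinG p.1 p.2) {p : ℂ × ℂ | p.2 ≠ 0} := by
  set c : ℂ := Complex.exp (-(2 * Real.pi)) with hcdef
  have hc : ‖c‖ < 1 := by
    have h1 : ‖c‖ = Real.exp ((-(2 * (Real.pi : ℂ))).re) := by
      rw [hcdef, Complex.norm_exp]
    have h2 : (-(2 * (Real.pi : ℂ))).re = -(2 * Real.pi) := by simp
    rw [h1, h2, Real.exp_lt_one_iff]
    linarith [Real.pi_pos]
  have hP := steinAux_differentiable hc
  -- rewrite steinG through the single-variable function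
  have hrw : ∀ p : ℂ × ℂ, p.2 ≠ 0 → steinG p.1 p.2 =
      Complex.exp (p.1 ^ 2 / (4 * Real.pi) + p.1 / (1 - Complex.I)) *
        (∏' ν : ℕ, (1 + (-p.2 * Complex.exp (-Complex.I * p.1)) * c ^ ν)) *
        (∏' μ : ℕ, (1 + (-p.2⁻¹ * Complex.exp (Complex.I * p.1) * c) * c ^ μ)) := by
    intro p _
    unfold steinG
    congr 1
    · congr 1
      refine tprod_congr fun ν => ?_
      rw [hcdef, ← Complex.exp_nat_mul,
        show (-Complex.I * p.1 - 2 * Real.pi * ν) =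
          (-Complex.I * p.1) + (ν : ℂ) * (-(2 * (Real.pi : ℝ) : ℂ)) by ring,
        Complex.exp_add]
      ring
    · refine tprod_congr fun μ => ?_
      rw [hcdef, ← Complex.exp_nat_mul,
        show (Complex.I * p.1 - 2 * Real.pi * ((μ : ℂ) + 1)) =
          (Complex.I * p.1) + (-(2 * (Real.pi : ℝ) : ℂ)) +
            (μ : ℂ) * (-(2 * (Real.pi : ℝ) : ℂ)) by ring,
        Complex.exp_add, Complex.exp_add]
      ring
  intro p hp
  have hp2 : p.2 ≠ 0 := hp
  have hopen : IsOpen {p : ℂ × ℂ | p.2 ≠ 0} :=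
    isOpen_compl_singleton.preimage continuous_snd
  -- differentiability of the composed expression at p
  have h1 : DifferentiableAt ℂ (fun p : ℂ × ℂ =>
      Complex.exp (p.1 ^ 2 / (4 * Real.pi) + p.1 / (1 - Complex.I))) p := by
    have hin : DifferentiableAt ℂ (fun p : ℂ × ℂ =>
        p.1 ^ 2 / (4 * Real.pi) + p.1 / (1 - Complex.I)) p :=
      by fun_prop
    exact hin.cexp
  have h2 : DifferentiableAt ℂ (fun p : ℂ × ℂ =>
      ∏' ν : ℕ, (1 + (-p.2 * Complex.exp (-Complex.I * p.1)) * c ^ ν)) p := by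
    have hin : DifferentiableAt ℂ (fun p : ℂ × ℂ =>
        -p.2 * Complex.exp (-Complex.I * p.1)) p :=
      (differentiableAt_snd.neg).mul ((differentiableAt_fst.const_mul _).cexp)
    exact (hP _).comp p hin
  have h3 : DifferentiableAt ℂ (fun p : ℂ × ℂ =>
      ∏' μ : ℕ, (1 + (-p.2⁻¹ * Complex.exp (Complex.I * p.1) * c) * c ^ μ)) p := by
    have hin : DifferentiableAt ℂ (fun p : ℂ × ℂ =>
        -p.2⁻¹ * Complex.exp (Complex.I * p.1) * c) p := by
      refine DifferentiableAt.mul_const ?_ _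
      exact ((differentiableAt_snd.inv hp2).neg).mul ((differentiableAt_fst.const_mul _).cexp)
    exact (hP _).comp p hin
  have hAt : DifferentiableAt ℂ (fun p : ℂ × ℂ =>
      Complex.exp (p.1 ^ 2 / (4 * Real.pi) + p.1 / (1 - Complex.I)) *
        (∏' ν : ℕ, (1 + (-p.2 * Complex.exp (-Complex.I * p.1)) * c ^ ν)) *
        (∏' μ : ℕ, (1 + (-p.2⁻¹ * Complex.exp (Complex.I * p.1) * c) * c ^ μ))) p :=
    (h1.mul h2).mul h3
  have hAt' : DifferentiableAt ℂ (fun p : ℂ × ℂ => steinG p.1 p.2) p := by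
    refine hAt.congr_of_eventuallyEq ?_
    filter_upwards [hopen.mem_nhds hp] with q hq
    exact (hrw q hq)
  exact hAt'.differentiableWithinAt
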